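/- The augmented (doubly robust) identity holds: for discrete (X, Y, R) with positivity and any function m(x, y), E[ 1(R=1) m(X,Y)/Π_1(X,Y) + Σ_{r≠1} 1(R=r) E{m(X,Y) | X, Y_{(r)}, R=r} − 1(R=1)/Π_1(X,Y) · Σ_{r≠1} Π_r(X,Y) E{m(X,Y) | X, Y_{(r)}, R=r} ] = E{m(X, Y)}, where Π_r(x, y) = p(R = r | x, y). -/

import Mathlib

open Finset
open scoped Classical

noncomputable def pr {Ω : Type*} [Fintype Ω] (μ : Ω → ℝ) (A : Ω → Prop) : ℝ :=
  ∑ ω, if A ω then μ ω else 0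

noncomputable def cpr {Ω : Type*} [Fintype Ω] (μ : Ω → ℝ) (A B : Ω → Prop) : ℝ :=
  pr μ (fun ω => A ω ∧ B ω) / pr μ B

/-- Conditional expectation `E{h | B}` in a finite probability space. -/
noncomputable def cexp {Ω : Type*} [Fintype Ω] (μ : Ω → ℝ) (h : Ω → ℝ) (B : Ω → Prop) : ℝ :=
  (∑ ω, if B ω then μ ω * h ω else 0) / pr μ B

section

variable {Ω 𝒳 𝒴 : Type*} [Fintype Ω] {p : ℕ}

/-- The propensity `Π_r(x, y) = p(R = r | X = x, Y = y)`. -/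
noncomputable def patProp (μ : Ω → ℝ) (X : Ω → 𝒳) (Y : Ω → Fin p → 𝒴)
    (R : Ω → Fin p → Bool) (r : Fin p → Bool) (x : 𝒳) (y : Fin p → 𝒴) : ℝ :=
  cpr μ (fun ω => ∀ j, R ω j = r j) (fun ω => X ω = x ∧ ∀ j, Y ω j = y j)

/-- `E{m(X,Y) | X = x, Y_{(r)} = y_{(r)}, R = r}`: conditional expectation of `m`
given the covariates, the coordinates of `Y` observed under pattern `r`, and `R = r`. -/
noncomputable def patCexp (μ : Ω → ℝ) (X : Ω → 𝒳) (Y : Ω → Fin p → 𝒴)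
    (R : Ω → Fin p → Bool) (m : 𝒳 → (Fin p → 𝒴) → ℝ) (r : Fin p → Bool)
    (x : 𝒳) (y : Fin p → 𝒴) : ℝ :=
  cexp μ (fun ω => m (X ω) (Y ω))
    (fun ω => X ω = x ∧ (∀ j, r j = true → Y ω j = y j) ∧ ∀ j, R ω j = r j)

lemma pr_nonneg (μ : Ω → ℝ) (hμ0 : ∀ ω, 0 ≤ μ ω) (A : Ω → Prop) : 0 ≤ pr μ A := by
  refine Finset.sum_nonneg fun ω _ => ?_
  split
  · exact hμ0 ω
  · exact le_refl 0

lemma le_pr (μ : Ω → ℝ) (hμ0 : ∀ ω, 0 ≤ μ ω) (A : Ω → Prop) (ω : Ω) (hA : A ω) :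
    μ ω ≤ pr μ A := by
  rw [pr]
  have h := Finset.single_le_sum (f := fun ω' => if A ω' then μ ω' else 0)
    (fun ω' _ => by split; exacts [hμ0 ω', le_refl 0]) (mem_univ ω)
  simpa [hA] using h

lemma key_lemma (μ : Ω → ℝ) (hμ0 : ∀ ω, 0 ≤ μ ω)
    (X : Ω → 𝒳) (Y : Ω → Fin p → 𝒴) (R : Ω → Fin p → Bool)
    (r' : Fin p → Bool) (f : 𝒳 → (Fin p → 𝒴) → ℝ) :
    ∑ ω, μ ω * (if ∀ j, R ω j = r' j then f (X ω) (Y ω) else 0)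
      = ∑ ω, μ ω * (patProp μ X Y R r' (X ω) (Y ω) * f (X ω) (Y ω)) := by
  classical
  have hmap : ∀ ω ∈ (univ : Finset Ω),
      (X ω, Y ω) ∈ (univ : Finset Ω).image (fun ω => (X ω, Y ω)) :=
    fun ω _ => mem_image_of_mem _ (mem_univ ω)
  rw [← Finset.sum_fiberwise_of_maps_to hmap
        (fun ω => μ ω * (if ∀ j, R ω j = r' j then f (X ω) (Y ω) else 0)),
      ← Finset.sum_fiberwise_of_maps_to hmap
        (fun ω => μ ω * (patProp μ X Y R r' (X ω) (Y ω) * f (X ω) (Y ω)))]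
  refine Finset.sum_congr rfl fun v _ => ?_
  obtain ⟨x, y⟩ := v
  rw [Finset.sum_filter, Finset.sum_filter]
  have hL : (∑ ω, if (X ω, Y ω) = (x, y) then
        μ ω * (if ∀ j, R ω j = r' j then f (X ω) (Y ω) else 0) else 0)
      = pr μ (fun ω => (∀ j, R ω j = r' j) ∧ (X ω = x ∧ ∀ j, Y ω j = y j)) * f x y := by
    rw [pr, Finset.sum_mul]
    refine Finset.sum_congr rfl fun ω _ => ?_
    by_cases hxy : (X ω, Y ω) = (x, y)
    · have hx : X ω = x := congrArg Prod.fst hxy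
      have hy : Y ω = y := congrArg Prod.snd hxy
      by_cases hR : ∀ j, R ω j = r' j
      · simp [hxy, hR, hx, hy, mul_comm]
      · simp [hxy, hR]
    · have hne : ¬ (X ω = x ∧ ∀ j, Y ω j = y j) := by
        rintro ⟨hx, hy⟩; exact hxy (Prod.ext hx (funext hy))
      simp [hxy, hne]
  have hR0 : (∑ ω, if (X ω, Y ω) = (x, y) then
        μ ω * (patProp μ X Y R r' (X ω) (Y ω) * f (X ω) (Y ω)) else 0)
      = pr μ (fun ω => X ω = x ∧ ∀ j, Y ω j = y j) * (patProp μ X Y R r' x y * f x y) := by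
    rw [pr, Finset.sum_mul]
    refine Finset.sum_congr rfl fun ω _ => ?_
    by_cases hxy : (X ω, Y ω) = (x, y)
    · have hx : X ω = x := congrArg Prod.fst hxy
      have hy : Y ω = y := congrArg Prod.snd hxy
      simp [hxy, hx, hy]
    · have hne : ¬ (X ω = x ∧ ∀ j, Y ω j = y j) := by
        rintro ⟨hx, hy⟩; exact hxy (Prod.ext hx (funext hy))
      simp [hxy, hne]
  rw [hL, hR0]
  simp only [patProp, cpr]
  set A := pr μ (fun ω => (∀ j, R ω j = r' j) ∧ (X ω = x ∧ ∀ j, Y ω j = y j)) with hA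
  set B := pr μ (fun ω => X ω = x ∧ ∀ j, Y ω j = y j) with hB
  by_cases hB0 : B = 0
  · have h1 : 0 ≤ A := pr_nonneg μ hμ0 _
    have h2 : A ≤ B := by
      refine Finset.sum_le_sum fun ω _ => ?_
      split_ifs with h h'
      · exact le_refl _
      · exact absurd h.2 h'
      · exact hμ0 ω
      · exact le_refl 0
    have hA0 : A = 0 := le_antisymm (h2.trans_eq hB0) h1
    simp [hA0, hB0]
  · field_simp

/-- the augmented (doubly robust) identity: the AIPW transformation of
`m` has the same mean as `m(X, Y)` itself. -/
theorem stmt15 (μ : Ω → ℝ) (hμ0 : ∀ ω, 0 ≤ μ ω) (hμ1 : ∑ ω, μ ω = 1)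
    (X : Ω → 𝒳) (Y : Ω → Fin p → 𝒴) (R : Ω → Fin p → Bool)
    (hpos : ∀ (r' : Fin p → Bool) (x : 𝒳) (y : Fin p → 𝒴),
      pr μ (fun ω => X ω = x ∧ ∀ j, Y ω j = y j) > 0 → patProp μ X Y R r' x y > 0)
    (m : 𝒳 → (Fin p → 𝒴) → ℝ) :
    ∑ ω, μ ω *
      ((if ∀ j, R ω j = true then
          m (X ω) (Y ω) / patProp μ X Y R (fun _ => true) (X ω) (Y ω) else 0)
        + (∑ r ∈ Finset.univ.filter (fun r : Fin p → Bool => r ≠ fun _ => true),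
            if ∀ j, R ω j = r j then patCexp μ X Y R m r (X ω) (Y ω) else 0)
        - (if ∀ j, R ω j = true then
            (∑ r ∈ Finset.univ.filter (fun r : Fin p → Bool => r ≠ fun _ => true),
              patProp μ X Y R r (X ω) (Y ω) * patCexp μ X Y R m r (X ω) (Y ω)) /
              patProp μ X Y R (fun _ => true) (X ω) (Y ω)
          else 0))
      = ∑ ω, μ ω * m (X ω) (Y ω) := by
  classical
  -- positivity of the full-pattern propensity wherever μ is positive
  have hpos' : ∀ ω, μ ω ≠ 0 → 0 < patProp μ X Y R (fun _ => true) (X ω) (Y ω) := by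
    intro ω hω
    apply hpos
    have hμω : 0 < μ ω := lt_of_le_of_ne (hμ0 ω) (Ne.symm hω)
    have hle : μ ω ≤ pr μ (fun ω' => X ω' = X ω ∧ ∀ j, Y ω' j = Y ω j) :=
      le_pr μ hμ0 _ ω ⟨rfl, fun j => rfl⟩
    exact lt_of_lt_of_le hμω hle
  set S : Finset (Fin p → Bool) := Finset.univ.filter (fun r : Fin p → Bool => r ≠ fun _ => true)
    with hS
  set G : 𝒳 → (Fin p → 𝒴) → ℝ :=
    fun x y => ∑ r ∈ S, patProp μ X Y R r x y * patCexp μ X Y R m r x y with hG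
  -- split the sum into three sums
  have hsplit : ∑ ω, μ ω *
      ((if ∀ j, R ω j = true then
          m (X ω) (Y ω) / patProp μ X Y R (fun _ => true) (X ω) (Y ω) else 0)
        + (∑ r ∈ S, if ∀ j, R ω j = r j then patCexp μ X Y R m r (X ω) (Y ω) else 0)
        - (if ∀ j, R ω j = true then
            G (X ω) (Y ω) / patProp μ X Y R (fun _ => true) (X ω) (Y ω) else 0))
      = (∑ ω, μ ω * (if ∀ j, R ω j = true then
          m (X ω) (Y ω) / patProp μ X Y R (fun _ => true) (X ω) (Y ω) else 0))
        + (∑ ω, μ ω * (∑ r ∈ S, if ∀ j, R ω j = r j then patCexp μ X Y R m r (X ω) (Y ω) else 0))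
        - (∑ ω, μ ω * (if ∀ j, R ω j = true then
            G (X ω) (Y ω) / patProp μ X Y R (fun _ => true) (X ω) (Y ω) else 0)) := by
    rw [← Finset.sum_add_distrib, ← Finset.sum_sub_distrib]
    refine Finset.sum_congr rfl fun ω _ => ?_
    ring
  rw [hsplit]
  -- Term 1: the IPW term has mean E[m]
  have h1 : (∑ ω, μ ω * (if ∀ j, R ω j = true then
      m (X ω) (Y ω) / patProp μ X Y R (fun _ => true) (X ω) (Y ω) else 0))
      = ∑ ω, μ ω * m (X ω) (Y ω) := by
    rw [key_lemma μ hμ0 X Y R (fun _ => true)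
      (fun x y => m x y / patProp μ X Y R (fun _ => true) x y)]
    refine Finset.sum_congr rfl fun ω _ => ?_
    by_cases hω : μ ω = 0
    · simp [hω]
    · rw [mul_div_cancel₀ _ (ne_of_gt (hpos' ω hω))]
  -- Term 3
  have h3 : (∑ ω, μ ω * (if ∀ j, R ω j = true then
      G (X ω) (Y ω) / patProp μ X Y R (fun _ => true) (X ω) (Y ω) else 0))
      = ∑ ω, μ ω * G (X ω) (Y ω) := by
    rw [key_lemma μ hμ0 X Y R (fun _ => true)
      (fun x y => G x y / patProp μ X Y R (fun _ => true) x y)]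
    refine Finset.sum_congr rfl fun ω _ => ?_
    by_cases hω : μ ω = 0
    · simp [hω]
    · rw [mul_div_cancel₀ _ (ne_of_gt (hpos' ω hω))]
  -- Term 2
  have h2 : (∑ ω, μ ω * (∑ r ∈ S, if ∀ j, R ω j = r j
        then patCexp μ X Y R m r (X ω) (Y ω) else 0))
      = ∑ ω, μ ω * G (X ω) (Y ω) := by
    simp only [Finset.mul_sum]
    rw [Finset.sum_comm]
    have : ∀ r ∈ S, (∑ ω, μ ω * (if ∀ j, R ω j = r j
          then patCexp μ X Y R m r (X ω) (Y ω) else 0))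
        = ∑ ω, μ ω * (patProp μ X Y R r (X ω) (Y ω) * patCexp μ X Y R m r (X ω) (Y ω)) :=
      fun r _ => key_lemma μ hμ0 X Y R r (fun x y => patCexp μ X Y R m r x y)
    rw [Finset.sum_congr rfl this, Finset.sum_comm]
    refine Finset.sum_congr rfl fun ω _ => ?_
    rw [hG, Finset.mul_sum]
  rw [h1, h2, h3]
  ring

end
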